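/- If h is a C² solution of (z²+1)²h'' + 2z(z²+1)h' + h² + 4h + 2C₁ = 0 on an interval I, then there exists a constant C₂ ∈ ℝ such that (z²+1)²(h')² + (2/3)h³ + 4h² + 4C₁h + (2/3)C₂ = 0 on I; in particular, h³ + 6h² + 6C₁h + C₂ ≤ 0 on I. -/

import Mathlib

open Real Set

/-- If `h` is a `C²` solution of `(z²+1)²h'' + 2z(z²+1)h' + h² + 4h + 2C₁ = 0` on an
interval, then there exists a constant `C₂` such that
`(z²+1)²(h')² + (2/3)h³ + 4h² + 4C₁h + (2/3)C₂ = 0` there; in particular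
`h³ + 6h² + 6C₁h + C₂ ≤ 0` on the interval. -/
theorem stmt7 (a b C₁ : ℝ) (hab : a < b) (h : ℝ → ℝ)
    (hh : ContDiffOn ℝ 2 h (Ioo a b))
    (hode : ∀ z ∈ Ioo a b,
      (z ^ 2 + 1) ^ 2 * deriv (deriv h) z + 2 * z * (z ^ 2 + 1) * deriv h z
        + (h z) ^ 2 + 4 * h z + 2 * C₁ = 0) :
    ∃ C₂ : ℝ, ∀ z ∈ Ioo a b,
      ((z ^ 2 + 1) ^ 2 * (deriv h z) ^ 2 + (2 / 3) * (h z) ^ 3 + 4 * (h z) ^ 2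
          + 4 * C₁ * h z + (2 / 3) * C₂ = 0) ∧
      (h z) ^ 3 + 6 * (h z) ^ 2 + 6 * C₁ * h z + C₂ ≤ 0 := by
  have hopen : IsOpen (Ioo a b) := isOpen_Ioo
  have hdiff : ∀ x ∈ Ioo a b, HasDerivAt h (deriv h x) x := by
    intro x hx
    exact ((hh.contDiffAt (hopen.mem_nhds hx)).differentiableAt
      (by norm_num)).hasDerivAt
  have hg1 : ContDiffOn ℝ 1 (deriv h) (Ioo a b) :=
    hh.deriv_of_isOpen hopen (by norm_num)
  have hgdiff : ∀ x ∈ Ioo a b, HasDerivAt (deriv h) (deriv (deriv h) x) x := by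
    intro x hx
    exact ((hg1.contDiffAt (hopen.mem_nhds hx)).differentiableAt
      one_ne_zero).hasDerivAt
  set F : ℝ → ℝ := fun z => (z ^ 2 + 1) ^ 2 * (deriv h z) ^ 2 + (2 / 3) * (h z) ^ 3
      + 4 * (h z) ^ 2 + 4 * C₁ * h z with hF
  have hFder : ∀ x ∈ Ioo a b, HasDerivAt F 0 x := by
    intro x hx
    have h1 := hdiff x hx
    have h2 := hgdiff x hx
    have hx2 : HasDerivAt (fun z : ℝ => (z ^ 2 + 1) ^ 2) (2 * (x ^ 2 + 1) * (2 * x)) x := by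
      have h0 : HasDerivAt (fun z : ℝ => z ^ 2 + 1) (2 * x) x := by
        simpa using ((hasDerivAt_pow 2 x).add_const 1)
      simpa using (h0.fun_pow 2)
    have hg2 : HasDerivAt (fun z => (deriv h z) ^ 2)
        (2 * deriv h x * deriv (deriv h) x) x := by
      have h' : HasDerivAt (fun z => (deriv h z) ^ 2) _ x := h2.fun_pow 2
      convert h' using 1 <;> try ring
    have hh3 : HasDerivAt (fun z => (h z) ^ 3) (3 * (h x) ^ 2 * deriv h x) x := by
      have h' : HasDerivAt (fun z => (h z) ^ 3) _ x := h1.fun_pow 3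
      convert h' using 1 <;> try ring
    have hh2 : HasDerivAt (fun z => (h z) ^ 2) (2 * h x * deriv h x) x := by
      have h' : HasDerivAt (fun z => (h z) ^ 2) _ x := h1.fun_pow 2
      convert h' using 1 <;> try ring
    have hD : HasDerivAt F
        (2 * (x ^ 2 + 1) * (2 * x) * (deriv h x) ^ 2
          + (x ^ 2 + 1) ^ 2 * (2 * deriv h x * deriv (deriv h) x)
          + 2 / 3 * (3 * (h x) ^ 2 * deriv h x)
          + 4 * (2 * h x * deriv h x) + 4 * C₁ * deriv h x) x :=
      (((hx2.mul hg2).add (hh3.const_mul (2/3 : ℝ))).add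
        (hh2.const_mul (4 : ℝ))).add (h1.const_mul (4 * C₁))
    have hzero := hode x hx
    have heq : 2 * (x ^ 2 + 1) * (2 * x) * (deriv h x) ^ 2
          + (x ^ 2 + 1) ^ 2 * (2 * deriv h x * deriv (deriv h) x)
          + 2 / 3 * (3 * (h x) ^ 2 * deriv h x)
          + 4 * (2 * h x * deriv h x) + 4 * C₁ * deriv h x
        = 2 * deriv h x * ((x ^ 2 + 1) ^ 2 * deriv (deriv h) x
          + 2 * x * (x ^ 2 + 1) * deriv h x + (h x) ^ 2 + 4 * h x + 2 * C₁) := by ring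
    rw [heq, hzero, mul_zero] at hD
    exact hD
  set x₀ : ℝ := (a + b) / 2 with hx₀
  have hx₀mem : x₀ ∈ Ioo a b := ⟨by linarith, by linarith⟩
  have hconst : ∀ x ∈ Ioo a b, F x = F x₀ := by
    intro x hx
    apply (convex_Ioo a b).is_const_of_fderivWithin_eq_zero
      (fun y hy => ((hFder y hy).differentiableAt).differentiableWithinAt)
      (fun y hy => ?_) hx hx₀mem
    rw [fderivWithin_eq_fderiv (hopen.uniqueDiffOn y hy) ((hFder y hy).differentiableAt)]
    rw [(hFder y hy).hasFDerivAt.fderiv]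
    ext t; simp
  refine ⟨-(3/2) * F x₀, fun z hz => ?_⟩
  have h1 : (z ^ 2 + 1) ^ 2 * (deriv h z) ^ 2 + (2 / 3) * (h z) ^ 3
      + 4 * (h z) ^ 2 + 4 * C₁ * h z = F x₀ := hconst z hz
  have hsq : (0:ℝ) ≤ (z ^ 2 + 1) ^ 2 * (deriv h z) ^ 2 := by positivity
  constructor
  · linarith
  · nlinarith
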